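/- arXiv:2509.00554 — 3 statements merged into one kernel-verified Lean document; each statement's English description precedes it below -/
import Mathlib

section
/- Let $k_0, k_0^\tau, h_0, h_0^\tau \in \mathbb{R}$ with $h_0^\tau \neq 0$. The quartic $Q(\omega) = \omega^4 + [(h_0)^2 - 2k_0 - (h_0^\tau)^2]\omega^2 + (k_0)^2 - (k_0^\tau)^2$ has two distinct positive roots $\omega_{H_1} > \omega_{H_2} > 0$ if and only if $(h_0)^2 < 2k_0 + (h_0^\tau)^2 - 2\sqrt{(k_0)^2 - (k_0^\tau)^2}$ and either (a) $k_0 > |k_0^\tau|$, or (b) $-[(h_0^\tau/2)^2 + (k_0^\tau/h_0^\tau)^2] \le k_0 < -|k_0^\tau|$. -/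
lemma quad_aux (b c : ℝ) :
    (∃ ω1 ω2 : ℝ, ω1 > ω2 ∧ ω2 > 0 ∧
        ω1^4 + b * ω1^2 + c = 0 ∧ ω2^4 + b * ω2^2 + c = 0) ↔
      (0 < c ∧ b < -2 * Real.sqrt c) := by
  constructor
  · rintro ⟨ω1, ω2, h12, h2, e1, e2⟩
    have hν12 : ω2^2 < ω1^2 := by nlinarith
    have hν2 : 0 < ω2^2 := by positivity
    have hb : b = -(ω1^2 + ω2^2) := by
      have h := sub_eq_zero.mpr (e1.trans e2.symm)
      have hfac : (ω1^2 - ω2^2) * (ω1^2 + ω2^2 + b) = 0 := by ring_nf; nlinarith [e1, e2]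
      rcases mul_eq_zero.mp hfac with h' | h'
      · nlinarith
      · linarith
    have hc : c = ω1^2 * ω2^2 := by nlinarith
    have hcpos : 0 < c := by nlinarith
    refine ⟨hcpos, ?_⟩
    have hbneg : b < 0 := by nlinarith
    have hdisc : (2 * Real.sqrt c)^2 < (-b)^2 := by
      have : Real.sqrt c ^ 2 = c := Real.sq_sqrt hcpos.le
      nlinarith [sq_nonneg (ω1^2 - ω2^2)]
    have := lt_of_pow_lt_pow_left₀ 2 (by linarith) hdisc
    linarith
  · rintro ⟨hc, hb⟩
    have hsc : Real.sqrt c ^ 2 = c := Real.sq_sqrt hc.le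
    have hscn : 0 ≤ Real.sqrt c := Real.sqrt_nonneg c
    have hbneg : b < 0 := by linarith
    have hd : 0 < b^2 - 4*c := by nlinarith
    set s := Real.sqrt (b^2 - 4*c) with hs
    have hs2 : s^2 = b^2 - 4*c := Real.sq_sqrt hd.le
    have hspos : 0 < s := Real.sqrt_pos.mpr hd
    have hslt : s < -b := by
      have : s^2 < (-b)^2 := by nlinarith
      exact lt_of_pow_lt_pow_left₀ 2 (by linarith) this
    have hν2pos : 0 < (-b - s)/2 := by linarith
    have hν1pos : 0 < (-b + s)/2 := by linarith
    refine ⟨Real.sqrt ((-b + s)/2), Real.sqrt ((-b - s)/2), ?_, ?_, ?_, ?_⟩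
    · exact Real.sqrt_lt_sqrt hν2pos.le (by linarith)
    · exact Real.sqrt_pos.mpr hν2pos
    · have h1 : Real.sqrt ((-b + s)/2) ^ 2 = (-b + s)/2 := Real.sq_sqrt hν1pos.le
      have : Real.sqrt ((-b + s)/2) ^ 4 = ((-b + s)/2)^2 := by
        rw [show (4:ℕ) = 2*2 by norm_num, pow_mul, h1]
      rw [this, h1]; nlinarith
    · have h1 : Real.sqrt ((-b - s)/2) ^ 2 = (-b - s)/2 := Real.sq_sqrt hν2pos.le
      have : Real.sqrt ((-b - s)/2) ^ 4 = ((-b - s)/2)^2 := by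
        rw [show (4:ℕ) = 2*2 by norm_num, pow_mul, h1]
      rw [this, h1]; nlinarith

theorem stmt_2 (k0 k0τ h0 h0τ : ℝ) (hτ : h0τ ≠ 0) :
    (∃ ωH1 ωH2 : ℝ, ωH1 > ωH2 ∧ ωH2 > 0 ∧
        ωH1^4 + (h0^2 - 2*k0 - h0τ^2) * ωH1^2 + k0^2 - k0τ^2 = 0 ∧
        ωH2^4 + (h0^2 - 2*k0 - h0τ^2) * ωH2^2 + k0^2 - k0τ^2 = 0) ↔
      (h0^2 < 2*k0 + h0τ^2 - 2 * Real.sqrt (k0^2 - k0τ^2) ∧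
        (k0 > |k0τ| ∨
          (-((h0τ/2)^2 + (k0τ/h0τ)^2) ≤ k0 ∧ k0 < -|k0τ|))) := by
  have hτ2 : 0 < h0τ^2 := by positivity
  have key := quad_aux (h0^2 - 2*k0 - h0τ^2) (k0^2 - k0τ^2)
  have habs : |k0τ|^2 = k0τ^2 := sq_abs k0τ
  have habsn : 0 ≤ |k0τ| := abs_nonneg k0τ
  constructor
  · intro h
    have h' : 0 < k0^2 - k0τ^2 ∧
        h0^2 - 2*k0 - h0τ^2 < -2 * Real.sqrt (k0^2 - k0τ^2) := by
      apply key.mp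
      obtain ⟨ω1, ω2, a, b, e1, e2⟩ := h
      exact ⟨ω1, ω2, a, b, by linarith, by linarith⟩
    obtain ⟨hc, hb⟩ := h'
    refine ⟨by linarith, ?_⟩
    have hk : k0 > |k0τ| ∨ k0 < -|k0τ| := by
      rcases lt_or_ge |k0τ| k0 with h | h
      · exact Or.inl h
      · right
        rcases lt_trichotomy k0 (-|k0τ|) with h' | h' | h'
        · exact h'
        · exfalso; nlinarith
        · exfalso
          have : |k0| ≤ |k0τ| := abs_le.mpr ⟨by linarith, h⟩
          nlinarith [sq_abs k0, sq_nonneg (|k0| - |k0τ|), abs_nonneg k0]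
    rcases hk with h | h
    · exact Or.inl h
    · right
      refine ⟨?_, h⟩
      -- from hb: 2√c < 2k0 + h0τ² - h0² ≤ 2k0 + h0τ²
      have hsc : Real.sqrt (k0^2 - k0τ^2) ^ 2 = k0^2 - k0τ^2 := Real.sq_sqrt hc.le
      have hscn : 0 ≤ Real.sqrt (k0^2 - k0τ^2) := Real.sqrt_nonneg _
      have h2 : 2 * Real.sqrt (k0^2 - k0τ^2) < 2*k0 + h0τ^2 := by nlinarith [sq_nonneg h0]
      have h3 : 4*(k0^2 - k0τ^2) < (2*k0 + h0τ^2)^2 := by nlinarith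
      have h4 : (0:ℝ) ≤ 4*k0*h0τ^2 + h0τ^4 + 4*k0τ^2 := by nlinarith
      have heq : -((h0τ/2)^2 + (k0τ/h0τ)^2) = k0 - (4*k0*h0τ^2 + h0τ^4 + 4*k0τ^2) / (4*h0τ^2) := by
        field_simp; ring
      rw [heq]
      have := div_nonneg h4 (by positivity : (0:ℝ) ≤ 4*h0τ^2)
      linarith
  · rintro ⟨hb, hk⟩
    have hc : 0 < k0^2 - k0τ^2 := by
      rcases hk with h | ⟨_, h⟩
      · nlinarith
      · nlinarith
    obtain ⟨ω1, ω2, a, b, e1, e2⟩ := key.mpr ⟨hc, by linarith⟩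
    exact ⟨ω1, ω2, a, b, by linarith, by linarith⟩
end

section
/- Let $a, b \in \mathbb{R}$ with $a > |b| \ge 0$ and $h_0, h_0^\tau \in \mathbb{R}$ with $(h_0)^2 > 2a + (h_0^\tau)^2 - 2\sqrt{a^2 - b^2}$. Then for every $\omega \in \mathbb{R}$, $(\omega^2 - a)^2 + (\omega h_0)^2 > b^2 + (\omega h_0^\tau)^2$. -/
theorem stmt_12 (a b h0 h0τ : ℝ) (hab : a > |b|)
    (hh : h0^2 > 2*a + h0τ^2 - 2 * Real.sqrt (a^2 - b^2)) :
    ∀ ω : ℝ, (ω^2 - a)^2 + (ω * h0)^2 > b^2 + (ω * h0τ)^2 := by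
  intro ω
  have hb : |b|^2 = b^2 := sq_abs b
  have hbn : (0:ℝ) ≤ |b| := abs_nonneg b
  have hpos : 0 < a^2 - b^2 := by nlinarith
  have hs : Real.sqrt (a^2 - b^2) ^ 2 = a^2 - b^2 := Real.sq_sqrt hpos.le
  have hsn : 0 < Real.sqrt (a^2 - b^2) := Real.sqrt_pos.mpr hpos
  rcases eq_or_ne ω 0 with h | h
  · subst h; simpa using by nlinarith
  · have hω : 0 < ω^2 := by positivity
    nlinarith [sq_nonneg (ω^2 - Real.sqrt (a^2 - b^2)), mul_pos hω (sub_pos.mpr hh), sq_nonneg ω]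
end

section
/- Let $k_0 > 0$, $h_0 > 0$, $k_0^\tau, h_0^\tau \in \mathbb{R}$ satisfy $k_0 > |k_0^\tau|$ and $(h_0)^2 > 2k_0 + (h_0^\tau)^2 - 2\sqrt{(k_0)^2 - (k_0^\tau)^2}$. Then for every $\tau \ge 0$, the characteristic equation $\mu^2 + h_0\mu + h_0^\tau\mu e^{-\mu\tau} + k_0 + k_0^\tau e^{-\mu\tau} = 0$ has no purely imaginary root $\mu = i\omega$, $\omega \in \mathbb{R}$. -/
theorem stmt_18 (k0 h0 k0τ h0τ : ℝ) (hk0 : 0 < k0) (hh0 : 0 < h0)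
    (hk : k0 > |k0τ|)
    (hh : h0^2 > 2*k0 + h0τ^2 - 2 * Real.sqrt (k0^2 - k0τ^2)) :
    ∀ τ : ℝ, 0 ≤ τ → ∀ ω : ℝ,
      (Complex.I * ω)^2 + h0 * (Complex.I * ω)
        + h0τ * (Complex.I * ω) * Complex.exp (-(Complex.I * ω) * τ)
        + k0 + k0τ * Complex.exp (-(Complex.I * ω) * τ) ≠ 0 := by
  intro τ hτ ω h
  set z := Complex.exp (-(Complex.I * ω) * τ) with hzdef
  have hz : ‖z‖ = 1 := by
    rw [hzdef, Complex.norm_exp]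
    simp
  have key : ((-ω^2 + k0 : ℝ) : ℂ) + ((h0 * ω : ℝ) : ℂ) * Complex.I
      = -((((k0τ : ℝ) : ℂ) + ((h0τ * ω : ℝ) : ℂ) * Complex.I) * z) := by
    push_cast
    linear_combination h - (ω:ℂ)^2 * Complex.I_sq
  have habs := congrArg (‖·‖) key
  rw [norm_neg, norm_mul, hz, mul_one] at habs
  have hsq := congrArg (· ^ 2) habs
  simp only [Complex.sq_norm, Complex.normSq_add_mul_I] at hsq
  -- hsq : (-ω^2 + k0)^2 + (h0*ω)^2 = k0τ^2 + (h0τ*ω)^2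
  set s := Real.sqrt (k0^2 - k0τ^2) with hsdef
  have hC : 0 < k0^2 - k0τ^2 := by
    have h1 : |k0τ|^2 = k0τ^2 := sq_abs k0τ
    nlinarith [abs_nonneg k0τ]
  have hs2 : s^2 = k0^2 - k0τ^2 := Real.sq_sqrt hC.le
  have hsnn : 0 ≤ s := Real.sqrt_nonneg _
  nlinarith [sq_nonneg (ω^2 - s), sq_nonneg ω,
    mul_nonneg (sq_nonneg ω) (by nlinarith : (0:ℝ) ≤ h0^2 - 2*k0 - h0τ^2 + 2*s)]
end
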